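/- Let n ≥ 2 be an integer, c ∈ ℂ with |c| > 1, m ≥ 1, and a_1, ..., a_m ∈ D_n. Suppose w ∈ E(c, 2n−1) satisfies 1 + Σ_{k=1}^m a_k c^{-k} = w / (2 c^{m+1}). Then there exists a sequence (q_k)_{k≥1} with q_k ∈ D_n for all k and 1 + Σ_{k=1}^∞ q_k c^{-k} = 0 (i.e., c ∈ M_n). -/

import Mathlib

/-- `A n = {-n+1, -n+3, ..., n-1} ⊂ ℂ`. -/
def Acoef (n : ℕ) : Set ℂ := {x | ∃ k : ℕ, k < n ∧ x = (n : ℂ) - 1 - 2 * k}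

/-- The collinear fractal `E(c,n)`. -/
def E (c : ℂ) (n : ℕ) : Set ℂ :=
  {z | ∃ a : ℕ → ℂ, (∀ k, a k ∈ Acoef n) ∧ HasSum (fun k => a k / c ^ k) z}

/-- `D n = {1-n, ..., -1, 0, 1, ..., n-1} ⊂ ℂ`. -/
def Dcoef (n : ℕ) : Set ℂ := {x | ∃ j : ℤ, |j| ≤ (n : ℤ) - 1 ∧ x = j}

theorem mem_M_of_polynomial_in_E (n : ℕ) (hn : 2 ≤ n) (c : ℂ) (hc : 1 < ‖c‖)
    (m : ℕ) (hm : 1 ≤ m) (a : ℕ → ℂ) (ha : ∀ k < m, a k ∈ Dcoef n)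
    (w : ℂ) (hw : w ∈ E c (2 * n - 1))
    (heq : 1 + ∑ k ∈ Finset.range m, a k / c ^ (k + 1) = w / (2 * c ^ (m + 1))) :
    ∃ q : ℕ → ℂ, (∀ k, q k ∈ Dcoef n) ∧ HasSum (fun k => q k / c ^ (k + 1)) (-1) := by
  obtain ⟨b, hb, hbs⟩ := hw
  have hc0 : c ≠ 0 := by
    intro h
    rw [h] at hc
    simp at hc
    linarith
  set q : ℕ → ℂ := fun k => if k < m then a k else -(b (k - m)) / 2 with hq
  refine ⟨q, ?_, ?_⟩
  · intro k
    by_cases hk : k < m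
    · simpa [hq, hk] using ha k hk
    · obtain ⟨k', hk', hbk⟩ := hb (k - m)
      refine ⟨(k' : ℤ) - ((n : ℤ) - 1), ?_, ?_⟩
      · rw [abs_le]
        constructor <;> omega
      · have h1 : (1 : ℕ) ≤ 2 * n := by omega
        simp only [hq, if_neg hk, hbk]
        push_cast [Nat.cast_sub h1]
        ring
  · have hshift : HasSum (fun j => q (j + m) / c ^ (j + m + 1)) (-w / (2 * c ^ (m + 1))) := by
      have h1 : HasSum (fun j => -(b j / c ^ j / 2 / c ^ (m + 1)))
          (-(w / 2 / c ^ (m + 1))) := ((hbs.div_const 2).div_const (c ^ (m + 1))).neg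
      have h2 : (fun j => q (j + m) / c ^ (j + m + 1)) =
          fun j => -(b j / c ^ j / 2 / c ^ (m + 1)) := by
        funext j
        have hjm : ¬ j + m < m := by omega
        simp only [hq, if_neg hjm, Nat.add_sub_cancel]
        ring
      have h3 : -w / (2 * c ^ (m + 1)) = -(w / 2 / c ^ (m + 1)) := by
        field_simp
      rw [h2, h3]
      exact h1
    have hmain := (hasSum_nat_add_iff (f := fun k => q k / c ^ (k + 1)) m).mp hshift
    have hsum_eq : ∑ i ∈ Finset.range m, q i / c ^ (i + 1) =
        ∑ k ∈ Finset.range m, a k / c ^ (k + 1) := by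
      refine Finset.sum_congr rfl fun i hi => ?_
      simp [hq, Finset.mem_range.mp hi]
    rw [hsum_eq] at hmain
    have hfin : -w / (2 * c ^ (m + 1)) + ∑ k ∈ Finset.range m, a k / c ^ (k + 1) = -1 := by
      linear_combination heq
    rwa [hfin] at hmain
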